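/- Let n ≥ 1 and let φ : ℂⁿ → ℝ be Lipschitz with constant 1. There exists a constant C > 0 (depending only on n) such that for every integer k ≥ 1, every function v : ℂⁿ → ℂ of class C¹, and every p ∈ ℂⁿ: |v(p)|·e^{−kφ(p)} ≤ C·( k^{−2} · sup_{z ∈ B̄(p, 1/k²)} ( ‖∂̄v(z)‖·e^{−kφ(z)} ) + k^{2n} · (∫_{B(p,1/k²)} |v|²·e^{−2kφ} dλ)^{1/2} ). -/

import Mathlib

open MeasureTheory Metric Real

noncomputable instance (n : ℕ) : MeasurableSpace (EuclideanSpace ℂ (Fin n)) := borel _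

instance (n : ℕ) : BorelSpace (EuclideanSpace ℂ (Fin n)) := ⟨rfl⟩

/-- Lebesgue measure on `ℂⁿ ≅ ℝ^{2n}`. -/
noncomputable instance (n : ℕ) : MeasureSpace (EuclideanSpace ℂ (Fin n)) :=
  letI : InnerProductSpace ℝ (EuclideanSpace ℂ (Fin n)) := InnerProductSpace.rclikeToReal ℂ _
  measureSpaceOfInnerProductSpace

/-- The (0,1)-part of the real derivative of `v : ℂⁿ → ℂ` at `z`, as an ℝ-linear map:
`∂̄v(z)(w) = ½( Dv(z)(w) + i·Dv(z)(i·w) )`. -/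
noncomputable def dbar {n : ℕ} (v : EuclideanSpace ℂ (Fin n) → ℂ)
    (z : EuclideanSpace ℂ (Fin n)) : EuclideanSpace ℂ (Fin n) →L[ℝ] ℂ :=
  (1 / 2 : ℝ) • (fderiv ℝ v z +
    (ContinuousLinearMap.restrictScalars ℝ
        ((Complex.I : ℂ) • ContinuousLinearMap.id ℂ ℂ)).comp
      ((fderiv ℝ v z).comp
        (ContinuousLinearMap.restrictScalars ℝ
          ((Complex.I : ℂ) • ContinuousLinearMap.id ℂ (EuclideanSpace ℂ (Fin n))))))

namespace DbarAux
variable {n : ℕ}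
local notation "E" => EuclideanSpace ℂ (Fin n)

lemma dbar_apply (v : E → ℂ) (z y : E) :
    dbar v z y = (1 / 2 : ℝ) •
      (fderiv ℝ v z y + Complex.I * (fderiv ℝ v z (Complex.I • y))) := by
  simp [dbar]

lemma fderiv_I_smul (v : E → ℂ) (z y : E) :
    fderiv ℝ v z (Complex.I • y)
      = Complex.I * fderiv ℝ v z y - 2 * Complex.I * dbar v z y := by
  have h := dbar_apply v z y
  rw [Complex.real_smul] at h
  push_cast at h
  linear_combination (2 * Complex.I) * h + (fderiv ℝ v z) (Complex.I • y) * Complex.I_sq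

lemma continuous_dbar {v : E → ℂ} (hv : ContDiff ℝ 1 v) : Continuous fun z => dbar v z := by
  have h : Continuous fun z => fderiv ℝ v z := hv.continuous_fderiv one_ne_zero
  unfold dbar
  fun_prop

lemma hasDerivAt_rot (t : ℝ) (w : E) (θ : ℝ) :
    HasDerivAt (fun θ : ℝ => (((t : ℂ) * Complex.exp (θ * Complex.I)) • w : E))
      (Complex.I • (((t : ℂ) * Complex.exp (θ * Complex.I)) • w)) θ := by
  have h1 : HasDerivAt (fun θ : ℝ => ((θ : ℂ) * Complex.I)) Complex.I θ := by
    simpa using (Complex.ofRealCLM.hasDerivAt (x := θ)).mul_const Complex.I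
  have h2 : HasDerivAt (fun θ : ℝ => Complex.exp (θ * Complex.I))
      (Complex.exp (θ * Complex.I) * Complex.I) θ := by
    simpa using h1.cexp
  have h3 := ((h2.const_mul (t : ℂ)).smul_const w)
  have e : (Complex.I • (((t : ℂ) * Complex.exp (θ * Complex.I)) • w) : E)
      = ((t : ℂ) * (Complex.exp (θ * Complex.I) * Complex.I)) • w := by
    rw [smul_smul]; congr 1; ring
  rw [e]; exact h3

lemma circle_identity {v : E → ℂ} (hv : ContDiff ℝ 1 v) (p w : E) {t : ℝ} (ht : 0 < t) :
    (∫ θ in (0:ℝ)..(2*π),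
        fderiv ℝ v (p + ((t : ℂ) * Complex.exp (θ * Complex.I)) • w)
          (Complex.exp (θ * Complex.I) • w))
      = 2 * ∫ θ in (0:ℝ)..(2*π),
          dbar v (p + ((t : ℂ) * Complex.exp (θ * Complex.I)) • w)
            (Complex.exp (θ * Complex.I) • w) := by
  set u : ℝ → ℂ := fun θ => Complex.exp (θ * Complex.I) with hu
  set c : ℝ → E := fun θ => p + ((t : ℂ) * u θ) • w with hc
  have hcont_fderiv : Continuous fun z => fderiv ℝ v z := hv.continuous_fderiv one_ne_zero
  have hcont_dbar : Continuous fun z => dbar v z := continuous_dbar hv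
  have hcont_u : Continuous u := by fun_prop
  have hcont_c : Continuous c := by fun_prop
  have hF : Continuous fun θ => fderiv ℝ v (c θ) (u θ • w) :=
    (hcont_fderiv.comp hcont_c).clm_apply (by fun_prop)
  have hG : Continuous fun θ => dbar v (c θ) (u θ • w) :=
    (hcont_dbar.comp hcont_c).clm_apply (by fun_prop)
  have hder : ∀ θ ∈ Set.uIcc (0:ℝ) (2*π), HasDerivAt (fun θ => v (c θ))
      ((t : ℂ) * (Complex.I * fderiv ℝ v (c θ) (u θ • w)
        - 2 * Complex.I * dbar v (c θ) (u θ • w))) θ := by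
    intro θ _
    have hc' : HasDerivAt c (Complex.I • (((t : ℂ) * u θ) • w)) θ :=
      ((hasDerivAt_rot t w θ).const_add p)
    have hd := ((hv.differentiable one_ne_zero (c θ)).hasFDerivAt).comp_hasDerivAt θ hc'
    refine hd.congr_deriv ?_
    have e1 : (Complex.I • (((t : ℂ) * u θ) • w) : E) = t • (Complex.I • (u θ • w)) := by
      rw [mul_smul, smul_comm, Complex.coe_smul]
    rw [e1, ContinuousLinearMap.map_smul, fderiv_I_smul]
    rw [Complex.real_smul]
  have hfint : IntervalIntegrable (fun θ => (t : ℂ) * (Complex.I * fderiv ℝ v (c θ) (u θ • w)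
        - 2 * Complex.I * dbar v (c θ) (u θ • w))) volume 0 (2*π) := by
    apply Continuous.intervalIntegrable
    fun_prop
  have hFTC := intervalIntegral.integral_eq_sub_of_hasDerivAt hder hfint
  have hper : c (2*π) = c 0 := by
    simp only [hc, hu]
    norm_num [Complex.exp_two_pi_mul_I]
  rw [hper, sub_self] at hFTC
  have hFint : IntervalIntegrable (fun θ => fderiv ℝ v (c θ) (u θ • w)) volume 0 (2*π) :=
    hF.intervalIntegrable _ _
  have hGint : IntervalIntegrable (fun θ => dbar v (c θ) (u θ • w)) volume 0 (2*π) :=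
    hG.intervalIntegrable _ _
  rw [intervalIntegral.integral_const_mul] at hFTC
  have hsub : (∫ θ in (0:ℝ)..(2*π), (Complex.I * fderiv ℝ v (c θ) (u θ • w)
        - 2 * Complex.I * dbar v (c θ) (u θ • w)))
      = Complex.I * (∫ θ in (0:ℝ)..(2*π), fderiv ℝ v (c θ) (u θ • w))
        - 2 * Complex.I * ∫ θ in (0:ℝ)..(2*π), dbar v (c θ) (u θ • w) := by
    rw [intervalIntegral.integral_sub ((hFint.const_mul _)) ((hGint.const_mul _)),
      intervalIntegral.integral_const_mul, intervalIntegral.integral_const_mul]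
  rw [hsub] at hFTC
  have ht' : (t : ℂ) ≠ 0 := by exact_mod_cast ht.ne'
  have := mul_eq_zero.mp hFTC
  rcases this with h | h
  · exact absurd h ht'
  · have : Complex.I * ((∫ θ in (0:ℝ)..(2*π), fderiv ℝ v (c θ) (u θ • w))
        - 2 * ∫ θ in (0:ℝ)..(2*π), dbar v (c θ) (u θ • w)) = 0 := by
      rw [mul_sub]; linear_combination h
    rcases mul_eq_zero.mp this with h' | h'
    · exact absurd h' Complex.I_ne_zero
    · linear_combination h'

lemma norm_unit (θ : ℝ) (w : E) : ‖(Complex.exp (θ * Complex.I) • w : E)‖ = ‖w‖ := by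
  rw [norm_smul, Complex.norm_exp_ofReal_mul_I, one_mul]

lemma segment_formula {v : E → ℂ} (hv : ContDiff ℝ 1 v) (p w : E) (θ : ℝ) :
    v (p + Complex.exp (θ * Complex.I) • w) - v p
      = ∫ t in (0:ℝ)..1,
          fderiv ℝ v (p + ((t : ℂ) * Complex.exp (θ * Complex.I)) • w)
            (Complex.exp (θ * Complex.I) • w) := by
  set u : ℂ := Complex.exp (θ * Complex.I) with hu
  set x : E := u • w with hx
  have hpt : ∀ t : ℝ, p + ((t : ℂ) * u) • w = p + t • x := by
    intro t; rw [mul_smul, Complex.coe_smul, hx]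
  have hder : ∀ t ∈ Set.uIcc (0:ℝ) 1, HasDerivAt (fun t : ℝ => v (p + t • x))
      (fderiv ℝ v (p + t • x) x) t := by
    intro t _
    have hγ : HasDerivAt (fun t : ℝ => p + t • x) x t := by
      simpa using ((hasDerivAt_id t).smul_const x).const_add p
    exact ((hv.differentiable one_ne_zero (p + t • x)).hasFDerivAt).comp_hasDerivAt t hγ
  have hcont : Continuous fun t : ℝ => fderiv ℝ v (p + t • x) x :=
    ((hv.continuous_fderiv one_ne_zero).comp (by fun_prop)).clm_apply continuous_const
  have hFTC := intervalIntegral.integral_eq_sub_of_hasDerivAt hder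
    (hcont.intervalIntegrable _ _)
  have h1 : p + (1:ℝ) • x = p + u • w := by rw [one_smul, hx]
  have h0 : p + (0:ℝ) • x = p := by rw [zero_smul, add_zero]
  rw [h1, h0] at hFTC
  rw [← hFTC]
  apply intervalIntegral.integral_congr
  intro t _
  simp only [← hpt]

lemma circle_avg_bound {v : E → ℂ} (hv : ContDiff ℝ 1 v) (p : E) {εr K : ℝ}
    (hK0 : 0 ≤ K) (hK : ∀ x ∈ closedBall p εr, ‖dbar v x‖ ≤ K) {w : E} (hw : ‖w‖ ≤ εr) :
    ‖∫ θ in Set.Ioc (0:ℝ) (2*π),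
        (v (p + Complex.exp (θ * Complex.I) • w) - v p)‖ ≤ 4 * π * (K * ‖w‖) := by
  have hcont_fderiv : Continuous fun z => fderiv ℝ v z := hv.continuous_fderiv one_ne_zero
  have hcont_dbar : Continuous fun z => dbar v z := continuous_dbar hv
  set F : ℝ → ℝ → ℂ := fun θ t =>
    fderiv ℝ v (p + ((t : ℂ) * Complex.exp (θ * Complex.I)) • w)
      (Complex.exp (θ * Complex.I) • w) with hF
  set G : ℝ → ℝ → ℂ := fun θ t =>
    dbar v (p + ((t : ℂ) * Complex.exp (θ * Complex.I)) • w)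
      (Complex.exp (θ * Complex.I) • w) with hG
  have hmem : ∀ (t θ : ℝ), t ∈ Set.Icc (0:ℝ) 1 →
      p + ((t : ℂ) * Complex.exp (θ * Complex.I)) • w ∈ closedBall p εr := by
    intro t θ ht
    rw [mem_closedBall, dist_eq_norm, add_sub_cancel_left, norm_smul]
    have : ‖(t : ℂ) * Complex.exp (θ * Complex.I)‖ = |t| := by
      rw [norm_mul, Complex.norm_exp_ofReal_mul_I, mul_one, Complex.norm_real, Real.norm_eq_abs]
    rw [this, abs_of_nonneg ht.1]
    calc t * ‖w‖ ≤ 1 * ‖w‖ := mul_le_mul_of_nonneg_right ht.2 (norm_nonneg w)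
      _ ≤ εr := by rwa [one_mul]
  have hcontF : Continuous (Function.uncurry F) := by
    apply Continuous.clm_apply
    · exact hcont_fderiv.comp (by fun_prop)
    · fun_prop
  have hstep1 : ∫ θ in Set.Ioc (0:ℝ) (2*π),
      (v (p + Complex.exp (θ * Complex.I) • w) - v p)
      = ∫ θ in Set.Ioc (0:ℝ) (2*π), ∫ t in Set.Ioc (0:ℝ) 1, F θ t := by
    apply setIntegral_congr_fun measurableSet_Ioc
    intro θ _
    show v (p + Complex.exp (θ * Complex.I) • w) - v p = ∫ t in Set.Ioc (0:ℝ) 1, F θ t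
    rw [segment_formula hv p w θ, intervalIntegral.integral_of_le (by norm_num : (0:ℝ) ≤ 1)]
  have hintF : Integrable (Function.uncurry F)
      ((volume.restrict (Set.Ioc (0:ℝ) (2*π))).prod (volume.restrict (Set.Ioc (0:ℝ) 1))) := by
    rw [Measure.prod_restrict]
    obtain ⟨C, hC⟩ := (IsCompact.exists_bound_of_continuousOn
      ((isCompact_Icc (a := (0:ℝ)) (b := 2*π)).prod (isCompact_Icc (a := (0:ℝ)) (b := 1)))
      hcontF.continuousOn)
    apply Measure.integrableOn_of_bounded (M := C)
    · rw [Measure.prod_prod]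
      exact (ENNReal.mul_lt_top measure_Ioc_lt_top measure_Ioc_lt_top).ne
    · exact hcontF.aestronglyMeasurable
    · filter_upwards [ae_restrict_mem ((measurableSet_Ioc).prod measurableSet_Ioc)] with x hx
      exact hC x ⟨Set.Ioc_subset_Icc_self hx.1, Set.Ioc_subset_Icc_self hx.2⟩
  have hswap : ∫ θ in Set.Ioc (0:ℝ) (2*π), ∫ t in Set.Ioc (0:ℝ) 1, F θ t
      = ∫ t in Set.Ioc (0:ℝ) 1, ∫ θ in Set.Ioc (0:ℝ) (2*π), F θ t :=
    integral_integral_swap hintF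
  have hinner : ∀ t ∈ Set.Ioc (0:ℝ) 1,
      (∫ θ in Set.Ioc (0:ℝ) (2*π), F θ t)
        = 2 * ∫ θ in Set.Ioc (0:ℝ) (2*π), G θ t := by
    intro t ht
    have := circle_identity hv p w ht.1
    rwa [intervalIntegral.integral_of_le Real.two_pi_pos.le,
      intervalIntegral.integral_of_le Real.two_pi_pos.le] at this
  have hGbound : ∀ t ∈ Set.Ioc (0:ℝ) 1, ∀ θ ∈ Set.Ioc (0:ℝ) (2*π),
      ‖G θ t‖ ≤ K * ‖w‖ := by
    intro t ht θ _
    calc ‖G θ t‖ ≤ ‖dbar v (p + ((t : ℂ) * Complex.exp (θ * Complex.I)) • w)‖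
          * ‖(Complex.exp (θ * Complex.I) • w : E)‖ :=
        ContinuousLinearMap.le_opNorm _ _
      _ ≤ K * ‖w‖ := by
        rw [norm_unit]
        exact mul_le_mul_of_nonneg_right
          (hK _ (hmem t θ ⟨ht.1.le, ht.2⟩)) (norm_nonneg w)
  rw [hstep1, hswap]
  have hbound2 : ∀ t ∈ Set.Ioc (0:ℝ) 1,
      ‖∫ θ in Set.Ioc (0:ℝ) (2*π), F θ t‖ ≤ 2 * (K * ‖w‖ * (2*π)) := by
    intro t ht
    rw [hinner t ht, norm_mul]
    have := norm_setIntegral_le_of_norm_le_const (μ := volume) (C := K * ‖w‖)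
      (s := Set.Ioc (0:ℝ) (2*π)) measure_Ioc_lt_top (fun θ hθ => hGbound t ht θ hθ)
    · simp only [Complex.norm_ofNat]
      calc (2:ℝ) * ‖∫ θ in Set.Ioc (0:ℝ) (2*π), G θ t‖
          ≤ 2 * (K * ‖w‖ * volume.real (Set.Ioc (0:ℝ) (2*π))) := by
            nlinarith [this, norm_nonneg (∫ θ in Set.Ioc (0:ℝ) (2*π), G θ t)]
        _ ≤ 2 * (K * ‖w‖ * (2*π)) := by
            rw [Real.volume_real_Ioc_of_le Real.two_pi_pos.le, sub_zero]
  calc ‖∫ t in Set.Ioc (0:ℝ) 1, ∫ θ in Set.Ioc (0:ℝ) (2*π), F θ t‖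
      ≤ (2 * (K * ‖w‖ * (2*π))) * (volume (Set.Ioc (0:ℝ) 1)).toReal :=
        norm_setIntegral_le_of_norm_le_const measure_Ioc_lt_top hbound2
    _ = 4 * π * (K * ‖w‖) := by
        rw [Real.volume_Ioc, sub_zero, ENNReal.toReal_ofReal (by norm_num : (0:ℝ) ≤ 1)]
        ring

noncomputable def rotIso (n : ℕ) (a : ℂ) (ha : ‖a‖ = 1) :
    (EuclideanSpace ℂ (Fin n)) ≃ₗᵢ[ℝ] (EuclideanSpace ℂ (Fin n)) where
  toLinearEquiv := (LinearEquiv.smulOfNeZero ℂ (EuclideanSpace ℂ (Fin n)) a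
    (by intro h; rw [h] at ha; simp at ha)).restrictScalars ℝ
  norm_map' := by
    intro z
    show ‖a • z‖ = ‖z‖
    rw [norm_smul, ha, one_mul]

lemma rotIso_apply (n : ℕ) (a : ℂ) (ha : ‖a‖ = 1) (z : EuclideanSpace ℂ (Fin n)) :
    rotIso n a ha z = a • z := rfl

lemma rot_measurePreserving {n : ℕ} (a : ℂ) (ha : ‖a‖ = 1)
    (p : EuclideanSpace ℂ (Fin n)) :
    MeasurePreserving (fun z : EuclideanSpace ℂ (Fin n) => p + a • (z - p))
      volume volume := by
  letI : InnerProductSpace ℝ (EuclideanSpace ℂ (Fin n)) := InnerProductSpace.rclikeToReal ℂ _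
  have h1 : MeasurePreserving (fun z : EuclideanSpace ℂ (Fin n) => a • z) volume volume :=
    (rotIso n a ha).measurePreserving
  have h2 := (measurePreserving_add_left (volume : Measure (EuclideanSpace ℂ (Fin n)))
    (p - a • p)).comp h1
  convert h2 using 2 with z
  show p + a • (z - p) = (p - a • p) + a • z
  rw [smul_sub]; abel

lemma rot_measurableEmbedding {n : ℕ} (a : ℂ) (ha : ‖a‖ = 1)
    (p : EuclideanSpace ℂ (Fin n)) :
    MeasurableEmbedding (fun z : EuclideanSpace ℂ (Fin n) => p + a • (z - p)) := by
  have : (fun z : EuclideanSpace ℂ (Fin n) => p + a • (z - p))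
      = fun z => (p - a • p) + ((rotIso n a ha).toHomeomorph z) := by
    funext z
    show p + a • (z - p) = (p - a • p) + a • z
    rw [smul_sub]; abel
  rw [this]
  exact ((rotIso n a ha).toHomeomorph.trans
    (Homeomorph.addLeft (p - a • p))).measurableEmbedding

lemma rot_preimage {n : ℕ} (a : ℂ) (ha : ‖a‖ = 1) (p : EuclideanSpace ℂ (Fin n)) (r : ℝ) :
    (fun z : EuclideanSpace ℂ (Fin n) => p + a • (z - p)) ⁻¹' closedBall p r
      = closedBall p r := by
  ext z
  simp only [Set.mem_preimage, mem_closedBall, dist_eq_norm, add_sub_cancel_left,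
    norm_smul, ha, one_mul]

lemma rot_setIntegral {n : ℕ} (a : ℂ) (ha : ‖a‖ = 1) (p : EuclideanSpace ℂ (Fin n)) (r : ℝ)
    (f : EuclideanSpace ℂ (Fin n) → ℝ) :
    ∫ z in closedBall p r, f (p + a • (z - p)) = ∫ z in closedBall p r, f z := by
  have := (rot_measurePreserving a ha p).setIntegral_preimage_emb
    (rot_measurableEmbedding a ha p) f (closedBall p r)
  rwa [rot_preimage a ha p r] at this

lemma core_estimate {v : EuclideanSpace ℂ (Fin n) → ℂ} (hv : ContDiff ℝ 1 v)
    (p : EuclideanSpace ℂ (Fin n)) {ε K : ℝ} (hε : 0 < ε) (hK0 : 0 ≤ K)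
    (hK : ∀ x ∈ closedBall p ε, ‖dbar v x‖ ≤ K) :
    (volume (closedBall p ε)).toReal * ‖v p‖ ≤
      (∫ z in closedBall p ε, ‖v z‖)
        + 2 * K * ε * (volume (closedBall p ε)).toReal := by
  have hScompact : IsCompact (closedBall p ε) := isCompact_closedBall p ε
  have hSmeas : MeasurableSet (closedBall p ε) :=
    (measurableSet_closedBall : MeasurableSet (closedBall p ε))
  have hSfin : volume (closedBall p ε) < ⊤ := hScompact.measure_lt_top
  have hvc : Continuous v := hv.continuous
  have hIocfin : volume (Set.Ioc (0:ℝ) (2*π)) < ⊤ := measure_Ioc_lt_top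
  set g : EuclideanSpace ℂ (Fin n) → ℝ := fun z =>
    ∫ θ in Set.Ioc (0:ℝ) (2*π), ‖v (p + Complex.exp (θ * Complex.I) • (z - p))‖ with hgdef
  have step1 : ∀ z ∈ closedBall p ε, 2*π*‖v p‖ - 4*π*(K*ε) ≤ g z := by
    intro z hz
    have hwε : ‖z - p‖ ≤ ε := by rw [← dist_eq_norm]; exact mem_closedBall.mp hz
    have havg := circle_avg_bound hv p hK0 hK hwε
    have hKw : 4 * π * (K * ‖z - p‖) ≤ 4 * π * (K * ε) := by
      have h1 := mul_le_mul_of_nonneg_left hwε hK0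
      nlinarith [Real.pi_pos]
    have hint1 : IntegrableOn (fun θ : ℝ => v (p + Complex.exp (θ * Complex.I) • (z - p)))
        (Set.Ioc (0:ℝ) (2*π)) volume := Continuous.integrableOn_Ioc (by fun_prop)
    have hsub : (∫ θ in Set.Ioc (0:ℝ) (2*π),
          (v (p + Complex.exp (θ * Complex.I) • (z - p)) - v p))
        = (∫ θ in Set.Ioc (0:ℝ) (2*π), v (p + Complex.exp (θ * Complex.I) • (z - p)))
          - (2*π : ℝ) • v p := by
      rw [integral_sub hint1 (integrableOn_const hIocfin.ne)]
      congr 1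
      rw [setIntegral_const, Real.volume_real_Ioc_of_le Real.two_pi_pos.le, sub_zero]
    rw [hsub] at havg
    have h2 : ‖((2*π : ℝ)) • v p‖ = 2*π*‖v p‖ := by
      rw [norm_smul, Real.norm_eq_abs, abs_of_nonneg Real.two_pi_pos.le]
    have h3 : ‖∫ θ in Set.Ioc (0:ℝ) (2*π), v (p + Complex.exp (θ * Complex.I) • (z - p))‖
        ≤ g z := norm_integral_le_integral_norm _
    have h4 := norm_sub_norm_le ((2*π : ℝ) • v p)
      (∫ θ in Set.Ioc (0:ℝ) (2*π), v (p + Complex.exp (θ * Complex.I) • (z - p)))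
    rw [h2, norm_sub_rev] at h4
    linarith [havg.trans hKw]
  have hcontH : Continuous (Function.uncurry fun (θ:ℝ) (z : EuclideanSpace ℂ (Fin n)) =>
      ‖v (p + Complex.exp (θ * Complex.I) • (z - p))‖) := by fun_prop
  have hintH : Integrable (Function.uncurry fun (θ:ℝ) (z : EuclideanSpace ℂ (Fin n)) =>
      ‖v (p + Complex.exp (θ * Complex.I) • (z - p))‖)
      ((volume.restrict (Set.Ioc (0:ℝ) (2*π))).prod (volume.restrict (closedBall p ε))) := by
    rw [Measure.prod_restrict]
    obtain ⟨C, hC⟩ := ((isCompact_Icc (a := (0:ℝ)) (b := 2*π)).prod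
      hScompact).exists_bound_of_continuousOn hcontH.continuousOn
    apply Measure.integrableOn_of_bounded (M := C)
    · rw [Measure.prod_prod]
      exact (ENNReal.mul_lt_top hIocfin hSfin).ne
    · exact hcontH.aestronglyMeasurable
    · filter_upwards [ae_restrict_mem (measurableSet_Ioc.prod hSmeas)] with x hx
      exact hC x ⟨Set.Ioc_subset_Icc_self hx.1, hx.2⟩
  have hgint : IntegrableOn g (closedBall p ε) := hintH.integral_prod_right
  have hlow : (volume (closedBall p ε)).toReal * (2*π*‖v p‖ - 4*π*(K*ε))
      ≤ ∫ z in closedBall p ε, g z := by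
    have := setIntegral_mono_on (integrableOn_const hSfin.ne) hgint hSmeas step1
    rw [setIntegral_const, smul_eq_mul] at this
    exact this
  have hswap := integral_integral_swap hintH
  have hupp : ∫ z in closedBall p ε, g z = 2*π * ∫ z in closedBall p ε, ‖v z‖ := by
    rw [hgdef]
    rw [← hswap]
    have hinner : ∀ θ : ℝ, (∫ z in closedBall p ε,
        ‖v (p + Complex.exp (θ * Complex.I) • (z - p))‖) = ∫ z in closedBall p ε, ‖v z‖ :=
      fun θ => rot_setIntegral _ (Complex.norm_exp_ofReal_mul_I θ) p ε (fun x => ‖v x‖)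
    rw [integral_congr_ae (Filter.Eventually.of_forall hinner)]
    rw [setIntegral_const, Real.volume_real_Ioc_of_le Real.two_pi_pos.le, sub_zero, smul_eq_mul]
  rw [hupp] at hlow
  have h2pi := Real.two_pi_pos
  have hVnn : (0:ℝ) ≤ (volume (closedBall p ε)).toReal := ENNReal.toReal_nonneg
  have hfin : 2*π*((volume (closedBall p ε)).toReal * ‖v p‖)
      ≤ 2*π*((∫ z in closedBall p ε, ‖v z‖)
        + 2 * K * ε * (volume (closedBall p ε)).toReal) := by nlinarith [hlow]
  exact le_of_mul_le_mul_left hfin h2pi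

end DbarAux


set_option maxHeartbeats 2000000
open DbarAux

/-- Weighted pointwise estimate with weight `e^{−kφ}`, `φ` 1-Lipschitz, at scale `ε = 1/k²`:
`|v(p)|e^{−kφ(p)} ≤ C( k^{−2}·sup_{B̄(p,1/k²)} ‖∂̄v‖e^{−kφ} + k^{2n}·(∫_{B(p,1/k²)} |v|²e^{−2kφ} dλ)^{1/2} )`. -/
theorem weighted_pointwise_dbar_estimate (n : ℕ) (hn : 1 ≤ n)
    (φ : EuclideanSpace ℂ (Fin n) → ℝ) (hφ : LipschitzWith 1 φ) :
    ∃ C > 0, ∀ k : ℕ, 1 ≤ k →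
      ∀ v : EuclideanSpace ℂ (Fin n) → ℂ, ContDiff ℝ 1 v →
        ∀ p : EuclideanSpace ℂ (Fin n),
          ‖v p‖ * Real.exp (-(k : ℝ) * φ p) ≤
            C * ((k : ℝ) ^ (-2 : ℝ) *
                (⨆ z ∈ closedBall p (1 / (k : ℝ) ^ 2),
                  ‖dbar v z‖ * Real.exp (-(k : ℝ) * φ z)) +
              (k : ℝ) ^ (2 * n) *
                (∫ z in ball p (1 / (k : ℝ) ^ 2),
                  ‖v z‖ ^ 2 * Real.exp (-2 * (k : ℝ) * φ z)) ^ (1/2 : ℝ)) := by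
  classical
  set c₁ : ℝ := (volume (ball (0 : EuclideanSpace ℂ (Fin n)) 1)).toReal with hc₁def
  have hc₁pos : 0 < c₁ := by
    apply ENNReal.toReal_pos
    · exact (measure_ball_pos volume 0 one_pos).ne'
    · exact measure_ball_lt_top.ne
  refine ⟨2 * Real.exp 1 + Real.exp 1 * c₁ ^ (-(1/2) : ℝ), by positivity, ?_⟩
  intro k hk v hv p
  have hvc : Continuous v := hv.continuous
  have hκ1 : (1:ℝ) ≤ (k:ℝ) := by exact_mod_cast hk
  have hκ0 : (0:ℝ) < (k:ℝ) := lt_of_lt_of_le one_pos hκ1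
  set ε : ℝ := 1 / (k:ℝ)^2 with hεdef
  have hε : 0 < ε := by positivity
  have hkε : (k:ℝ) * ε ≤ 1 := by
    rw [hεdef, mul_one_div, div_le_one (by positivity)]
    nlinarith
  set S := closedBall p ε with hSdef
  have hScompact : IsCompact S := isCompact_closedBall p ε
  have hSmeas : MeasurableSet S := (measurableSet_closedBall : MeasurableSet (closedBall p ε))
  have hSfin : volume S < ⊤ := hScompact.measure_lt_top
  haveI : IsFiniteMeasure (volume.restrict S) :=
    ⟨by rw [Measure.restrict_apply_univ]; exact hSfin⟩
  set f : EuclideanSpace ℂ (Fin n) → ℝ :=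
    fun z => ‖dbar v z‖ * Real.exp (-(k:ℝ) * φ z) with hfdef
  have hfcont : Continuous f :=
    ((continuous_dbar hv).norm).mul
      (Real.continuous_exp.comp (continuous_const.mul hφ.continuous))
  set M : ℝ := ⨆ z ∈ S, f z with hMdef
  -- the sup bounds f on S
  obtain ⟨B, hB⟩ := hScompact.exists_bound_of_continuousOn hfcont.continuousOn
  have hbdd : BddAbove (Set.range fun z => ⨆ (_ : z ∈ S), f z) := by
    refine ⟨max B 0, ?_⟩
    rintro y ⟨z, rfl⟩
    show (⨆ (_ : z ∈ S), f z) ≤ max B 0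
    by_cases hz : z ∈ S
    · rw [ciSup_pos hz]
      exact le_max_of_le_left ((le_abs_self _).trans (by simpa [Real.norm_eq_abs] using hB z hz))
    · haveI : IsEmpty (z ∈ S) := ⟨hz⟩
      rw [Real.iSup_of_isEmpty]
      exact le_max_right _ _
  have hfM : ∀ x ∈ S, f x ≤ M := by
    intro x hx
    rw [hMdef, ← ciSup_pos (f := fun _ => f x) hx]
    exact le_ciSup hbdd x
  have hM0 : 0 ≤ M :=
    le_trans (by positivity) (hfM p (mem_closedBall_self hε.le))
  -- Lipschitz weight comparison on S
  have hφcomp : ∀ x ∈ S, (k:ℝ) * φ x ≤ (k:ℝ) * φ p + 1 ∧ (k:ℝ) * φ p ≤ (k:ℝ) * φ x + 1 := by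
    intro x hx
    have hd : dist (φ x) (φ p) ≤ dist x p := by
      simpa using hφ.dist_le_mul x p
    have hd2 : |φ x - φ p| ≤ ε := by
      rw [← Real.dist_eq]; exact hd.trans (mem_closedBall.mp hx)
    have h1 : (k:ℝ) * |φ x - φ p| ≤ 1 :=
      le_trans (mul_le_mul_of_nonneg_left hd2 hκ0.le) hkε
    rw [abs_le] at hd2
    constructor <;> nlinarith [abs_nonneg (φ x - φ p), le_abs_self (φ x - φ p),
      neg_abs_le (φ x - φ p)]
  -- dbar bound on S
  set K : ℝ := Real.exp 1 * Real.exp ((k:ℝ) * φ p) * M with hKdef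
  have hK0 : 0 ≤ K := by positivity
  have hKb : ∀ x ∈ S, ‖dbar v x‖ ≤ K := by
    intro x hx
    have h1 : ‖dbar v x‖ = f x * Real.exp ((k:ℝ) * φ x) := by
      rw [hfdef, mul_assoc, ← Real.exp_add, neg_mul, neg_add_cancel, Real.exp_zero, mul_one]
    rw [h1, hKdef]
    calc f x * Real.exp ((k:ℝ) * φ x) ≤ M * Real.exp ((k:ℝ) * φ p + 1) := by
          apply mul_le_mul (hfM x hx) (Real.exp_le_exp.mpr (hφcomp x hx).1)
            (Real.exp_nonneg _)
            hM0
      _ = Real.exp 1 * Real.exp ((k:ℝ) * φ p) * M := by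
          rw [Real.exp_add]; ring
  -- core estimate
  have hcore := core_estimate hv p hε hK0 hKb
  set V : ℝ := (volume S).toReal with hVdef
  have hVpos : 0 < V :=
    ENNReal.toReal_pos (measure_closedBall_pos volume p hε).ne' hSfin.ne
  set W : ℝ := Real.exp (-(k:ℝ) * φ p) with hWdef
  have hW : 0 < W := Real.exp_pos _
  set fw : EuclideanSpace ℂ (Fin n) → ℝ :=
    fun z => ‖v z‖ * Real.exp (-(k:ℝ) * φ z) with hfwdef
  have hfwcont : Continuous fw :=
    (hvc.norm).mul (Real.continuous_exp.comp (continuous_const.mul hφ.continuous))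
  have hfwnn : ∀ z, 0 ≤ fw z := fun z => by positivity
  -- weighted L¹ comparison
  have hIw : (∫ z in S, ‖v z‖) * W ≤ Real.exp 1 * ∫ z in S, fw z := by
    rw [← integral_mul_const]
    rw [← integral_const_mul]
    apply setIntegral_mono_on
    · exact ((hvc.norm.mul continuous_const).continuousOn).integrableOn_compact hScompact
    · exact ((continuous_const.mul hfwcont).continuousOn).integrableOn_compact hScompact
    · exact hSmeas
    · intro x hx
      have h1 : W ≤ Real.exp 1 * Real.exp (-(k:ℝ) * φ x) := by
        rw [hWdef, ← Real.exp_add]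
        apply Real.exp_le_exp.mpr
        have := (hφcomp x hx).1
        nlinarith
      calc ‖v x‖ * W ≤ ‖v x‖ * (Real.exp 1 * Real.exp (-(k:ℝ) * φ x)) :=
            mul_le_mul_of_nonneg_left h1 (norm_nonneg _)
        _ = Real.exp 1 * fw x := by rw [hfwdef]; ring
  -- Cauchy-Schwarz
  have hpq : Real.HolderConjugate 2 2 := Real.HolderConjugate.two_two
  obtain ⟨B2, hB2⟩ := hScompact.exists_bound_of_continuousOn hfwcont.continuousOn
  have hmem2 : MemLp fw (ENNReal.ofReal (2:ℝ)) (volume.restrict S) := by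
    apply MemLp.of_bound hfwcont.aestronglyMeasurable.restrict B2
    filter_upwards [ae_restrict_mem hSmeas] with x hx
    exact hB2 x hx
  have hmem1 : MemLp (fun _ : EuclideanSpace ℂ (Fin n) => (1:ℝ))
      (ENNReal.ofReal (2:ℝ)) (volume.restrict S) := memLp_const 1
  have hCS :  ∫ z in S, fw z ≤
      (∫ z in S, fw z ^ (2:ℝ)) ^ ((1:ℝ)/2) * V ^ ((1:ℝ)/2) := by
    have := integral_mul_le_Lp_mul_Lq_of_nonneg hpq
      (Filter.Eventually.of_forall hfwnn)
      (Filter.Eventually.of_forall (fun _ => zero_le_one)) hmem2 hmem1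
    simp only [mul_one, Real.one_rpow] at this
    rwa [setIntegral_const, smul_eq_mul, mul_one] at this
  -- identify the squared integrand with the statement's integrand
  have hpt : ∀ z, fw z ^ (2:ℝ) = ‖v z‖^2 * Real.exp (-2*(k:ℝ)*φ z) := by
    intro z
    rw [hfwdef]
    rw [show ((2:ℝ)) = ((2:ℕ):ℝ) by norm_num, Real.rpow_natCast]
    rw [mul_pow]
    congr 1
    rw [sq, ← Real.exp_add]
    congr 1
    ring
  have hae : S =ᵐ[volume] ball p ε := by
    rw [ae_eq_set]
    constructor
    · rw [hSdef, closedBall_diff_ball]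
      exact Measure.addHaar_sphere_of_ne_zero volume p hε.ne'
    · rw [hSdef, Set.diff_eq_empty.mpr ball_subset_closedBall]
      exact measure_empty
  set J : ℝ := ∫ z in ball p ε, ‖v z‖^2 * Real.exp (-2*(k:ℝ)*φ z) with hJdef
  have hJeq : ∫ z in S, fw z ^ (2:ℝ) = J := by
    rw [hJdef, ← setIntegral_congr_set hae]
    exact integral_congr_ae (Filter.Eventually.of_forall (fun z => hpt z))
  have hJnn : 0 ≤ J := by
    rw [hJdef]
    apply integral_nonneg
    intro z
    positivity
  have hJh : 0 ≤ J ^ ((1:ℝ)/2) := Real.rpow_nonneg hJnn _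
  -- volume computation
  have hfr : Module.finrank ℝ (EuclideanSpace ℂ (Fin n)) = 2*n := by
    rw [finrank_real_of_complex, finrank_euclideanSpace, Fintype.card_fin]
  set y : ℝ := (k:ℝ)^(2*n) with hydef
  have hy : 0 < y := by positivity
  have hVeq : V = ((y^2)⁻¹) * c₁ := by
    rw [hVdef, hSdef, Measure.addHaar_closedBall volume p hε.le, hfr,
      ENNReal.toReal_mul, ENNReal.toReal_ofReal (by positivity)]
    congr 1
    rw [hεdef, hydef, one_div, ← inv_pow, ← pow_mul, ← pow_mul]
    ring_nf
  have h1 : ((y^2)⁻¹ : ℝ) ^ ((1:ℝ)/2) = y⁻¹ := by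
    rw [Real.inv_rpow (by positivity), ← Real.rpow_natCast y 2, ← Real.rpow_mul hy.le]
    norm_num
  have h2 : c₁ ^ ((1:ℝ)/2) = c₁ ^ (-(1/2):ℝ) * c₁ := by
    have h7 := Real.rpow_add hc₁pos (-(1/2)) 1
    rw [Real.rpow_one] at h7
    rw [← h7]
    norm_num
  have hVhalf : V ^ ((1:ℝ)/2) = c₁ ^ (-(1/2):ℝ) * y * V := by
    rw [hVeq, Real.mul_rpow (by positivity) hc₁pos.le, h1, h2]
    field_simp
  -- put the weight into the core estimate
  have hKW : K * W = Real.exp 1 * M := by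
    rw [hKdef, hWdef, neg_mul, Real.exp_neg]
    field_simp
  have hchain : V * (‖v p‖ * W) ≤
      Real.exp 1 * (J ^ ((1:ℝ)/2) * V ^ ((1:ℝ)/2)) + 2 * (Real.exp 1 * M) * ε * V := by
    have h0 := mul_le_mul_of_nonneg_right hcore hW.le
    have h3 : ((∫ z in closedBall p ε, ‖v z‖) + 2*K*ε*V) * W
        = (∫ z in closedBall p ε, ‖v z‖) * W + 2*(K*W)*ε*V := by ring
    rw [h3, hKW] at h0
    have h4 : (∫ z in closedBall p ε, ‖v z‖) * W ≤
        Real.exp 1 * (J ^ ((1:ℝ)/2) * V ^ ((1:ℝ)/2)) := by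
      have h5 := hCS
      rw [hJeq] at h5
      exact hIw.trans (mul_le_mul_of_nonneg_left h5 (Real.exp_nonneg 1))
    have h6 : V * (‖v p‖ * W) = (V * ‖v p‖) * W := by ring
    rw [h6]
    linarith [h0, h4]
  -- divide by V
  have hdiv : ‖v p‖ * W ≤
      Real.exp 1 * c₁ ^ (-(1/2):ℝ) * (y * J ^ ((1:ℝ)/2)) + 2 * Real.exp 1 * (ε * M) := by
    have h5 : V * (‖v p‖ * W) ≤
        V * (Real.exp 1 * c₁ ^ (-(1/2):ℝ) * (y * J ^ ((1:ℝ)/2))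
          + 2 * Real.exp 1 * (ε * M)) := by
      calc V * (‖v p‖ * W) ≤
          Real.exp 1 * (J ^ ((1:ℝ)/2) * V ^ ((1:ℝ)/2)) + 2 * (Real.exp 1 * M) * ε * V :=
            hchain
        _ = V * (Real.exp 1 * c₁ ^ (-(1/2):ℝ) * (y * J ^ ((1:ℝ)/2))
            + 2 * Real.exp 1 * (ε * M)) := by
            rw [hVhalf]; ring
    exact le_of_mul_le_mul_left h5 hVpos
  -- conclude
  have hεrpow : ((k:ℝ)) ^ (-2:ℝ) = ε := by
    rw [hεdef, Real.rpow_neg hκ0.le, one_div]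
    congr 1
    rw [show ((2:ℝ)) = ((2:ℕ):ℝ) by norm_num, Real.rpow_natCast]
  rw [hεrpow]
  have hεM : 0 ≤ ε * M := mul_nonneg hε.le hM0
  have hyJ : 0 ≤ y * J ^ ((1:ℝ)/2) := mul_nonneg hy.le hJh
  have hcoef : 0 ≤ c₁ ^ (-(1/2):ℝ) := Real.rpow_nonneg hc₁pos.le _
  have hexp : 0 < Real.exp 1 := Real.exp_pos 1
  calc ‖v p‖ * W ≤
      Real.exp 1 * c₁ ^ (-(1/2):ℝ) * (y * J ^ ((1:ℝ)/2)) + 2 * Real.exp 1 * (ε * M) := hdiv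
    _ ≤ (2 * Real.exp 1 + Real.exp 1 * c₁ ^ (-(1/2) : ℝ)) * (ε * M + y * J ^ ((1:ℝ)/2)) := by
        nlinarith [mul_nonneg (mul_nonneg hexp.le hcoef) hεM, mul_nonneg hexp.le hyJ,
          mul_nonneg hexp.le hεM, mul_nonneg (mul_nonneg hexp.le hcoef) hyJ]
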